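/- For α ∈ [0, (37-√505)/72], the function h(x) = ((12α² - 10α + 1)/(4(1-α)²)) x³ - (1/(2(1-α))) x² + (5-7α) x + 2(1-α) is strictly monotone increasing on the interval [0, 2(1-α)]. -/

import Mathlib

theorem stmt_10 (α : ℝ) (hα0 : 0 ≤ α) (hα1 : α ≤ (37 - Real.sqrt 505) / 72)
    (h : ℝ → ℝ)
    (hh : ∀ x, h x = (12 * α ^ 2 - 10 * α + 1) / (4 * (1 - α) ^ 2) * x ^ 3
      - 1 / (2 * (1 - α)) * x ^ 2 + (5 - 7 * α) * x + 2 * (1 - α)) :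
    StrictMonoOn h (Set.Icc 0 (2 * (1 - α))) := by
  have hs5 : Real.sqrt 505 ^ 2 = 505 := Real.sq_sqrt (by norm_num)
  have hs5n : (0:ℝ) ≤ Real.sqrt 505 := Real.sqrt_nonneg 505
  have hαb : α ≤ 15 / 72 := by nlinarith
  have hA : 36 * α ^ 2 - 37 * α + 6 ≥ 0 := by nlinarith
  have h1 : (0:ℝ) < 1 - α := by linarith
  have heq : h = fun x => (12 * α ^ 2 - 10 * α + 1) / (4 * (1 - α) ^ 2) * x ^ 3
      - 1 / (2 * (1 - α)) * x ^ 2 + (5 - 7 * α) * x + 2 * (1 - α) := funext hh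
  rw [heq]
  have hderiv : ∀ x : ℝ, HasDerivAt (fun x : ℝ => (12 * α ^ 2 - 10 * α + 1) / (4 * (1 - α) ^ 2) * x ^ 3
      - 1 / (2 * (1 - α)) * x ^ 2 + (5 - 7 * α) * x + 2 * (1 - α))
      ((12 * α ^ 2 - 10 * α + 1) / (4 * (1 - α) ^ 2) * (3 * x ^ 2)
        - 1 / (2 * (1 - α)) * (2 * x) + (5 - 7 * α)) x := by
    intro x
    have := (((hasDerivAt_pow 3 x).const_mul ((12 * α ^ 2 - 10 * α + 1) / (4 * (1 - α) ^ 2))).sub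
      ((hasDerivAt_pow 2 x).const_mul (1 / (2 * (1 - α))))).add
      (((hasDerivAt_id x).const_mul (5 - 7 * α)).add_const (2 * (1 - α)))
    refine (this.congr_deriv ?_).congr_of_eventuallyEq (Filter.Eventually.of_forall fun y => ?_)
    · rw [show (3:ℕ) - 1 = 2 from rfl, show (2:ℕ) - 1 = 1 from rfl]; push_cast; ring
    · simp only [Pi.add_apply, Pi.sub_apply, id_eq]; ring
  apply strictMonoOn_of_deriv_pos (convex_Icc _ _)
  · exact (Continuous.continuousOn (by continuity))
  · intro x hx
    rw [interior_Icc] at hx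
    obtain ⟨hx0, hx2⟩ := hx
    rw [(hderiv x).deriv]
    have hkey : 3 * (12 * α ^ 2 - 10 * α + 1) * x ^ 2 - 4 * (1 - α) * x
        + 4 * (1 - α) ^ 2 * (5 - 7 * α) > 0 := by
      rcases le_or_gt 0 (12 * α ^ 2 - 10 * α + 1) with hc | hc
      · nlinarith [mul_nonneg hc (sq_nonneg x), mul_pos h1 (sub_pos.2 hx2)]
      · nlinarith [mul_nonneg (mul_nonneg (le_of_lt (neg_pos.2 hc)) hx0.le)
          (sub_pos.2 hx2).le, mul_nonneg hA hx0.le, mul_pos h1 h1]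
    have h4 : (0:ℝ) < 4 * (1 - α) ^ 2 := by positivity
    have : (12 * α ^ 2 - 10 * α + 1) / (4 * (1 - α) ^ 2) * (3 * x ^ 2)
        - 1 / (2 * (1 - α)) * (2 * x) + (5 - 7 * α)
        = (3 * (12 * α ^ 2 - 10 * α + 1) * x ^ 2 - 4 * (1 - α) * x
          + 4 * (1 - α) ^ 2 * (5 - 7 * α)) / (4 * (1 - α) ^ 2) := by
      field_simp
    rw [this]
    exact div_pos hkey h4
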